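/- Let φ ≥ 1 and n ≥ 2φ−1, let c_0, …, c_n and d_0, …, d_n be control points in ℝ^d and π ∈ ℝ^d a point such that c_{n−φ+1} = ⋯ = c_n = π and d_0 = ⋯ = d_{φ−1} = π. Define the piecewise curve P on [0,2] by P(t) = Σ_{k=0}^{n} c_k B_{k,n}(t) for t ∈ [0,1] and P(t) = Σ_{k=0}^{n} d_k B_{k,n}(t−1) for t ∈ [1,2]. Then P is well defined (both formulas give π at t = 1) and P is continuously differentiable up to order φ−1 on (0,2); in particular, for every 1 ≤ r ≤ φ−1 the r-th derivatives of both pieces at the junction t = 1 agree (both equal 0). -/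

import Mathlib

/-- The Bernstein basis polynomial `B_{k,n}(t) = C(n,k) t^k (1-t)^(n-k)`. -/
noncomputable def bernsteinBasis (n k : ℕ) (t : ℝ) : ℝ :=
  (n.choose k : ℝ) * t ^ k * (1 - t) ^ (n - k)

section aux
variable {E : Type*} [NormedAddCommGroup E] [NormedSpace ℝ E]

lemma minpow_hasDerivAt (m : ℕ) (x : ℝ) :
    HasDerivAt (fun x : ℝ => (min x 0) ^ (m + 2)) (((m : ℝ) + 2) * (min x 0) ^ (m + 1)) x := by
  rcases lt_trichotomy x 0 with hx | rfl | hx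
  · have h1 : HasDerivAt (fun x : ℝ => x ^ (m + 2)) (((m : ℝ) + 2) * x ^ (m + 1)) x := by
      simpa using hasDerivAt_pow (m + 2) x
    have heq : (fun y : ℝ => (min y 0) ^ (m + 2)) =ᶠ[nhds x] fun y => y ^ (m + 2) := by
      filter_upwards [Iio_mem_nhds hx] with y hy
      rw [min_eq_left (le_of_lt hy)]
    rw [min_eq_left hx.le]
    exact h1.congr_of_eventuallyEq heq
  · rw [hasDerivAt_iff_isLittleO]
    simp only [min_self, sub_zero, smul_eq_mul, zero_pow (by omega : m + 2 ≠ 0),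
      zero_pow (by omega : m + 1 ≠ 0), mul_zero, sub_zero]
    rw [Asymptotics.isLittleO_iff]
    intro ε hε
    have hmem : Set.Ioo (-(min ε 1)) (min ε 1) ∈ nhds (0 : ℝ) :=
      Ioo_mem_nhds (by simp [hε]) (by simp [hε])
    filter_upwards [hmem] with x hx
    have hax : |x| ≤ min ε 1 := by
      rw [abs_le]; constructor <;> [linarith [hx.1]; linarith [hx.2]]
    have h1 : |min x 0| ≤ |x| := by
      rcases le_total x 0 with h | h
      · rw [min_eq_left h]
      · rw [min_eq_right h]; simp
    calc ‖(min x 0) ^ (m + 2)‖ = |min x 0| ^ (m + 2) := by rw [Real.norm_eq_abs, abs_pow]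
      _ ≤ |x| ^ (m + 2) := pow_le_pow_left₀ (abs_nonneg _) h1 _
      _ = |x| ^ (m + 1) * |x| := by rw [pow_succ]
      _ ≤ ε * ‖x‖ := by
          rw [Real.norm_eq_abs]
          apply mul_le_mul_of_nonneg_right _ (abs_nonneg x)
          calc |x| ^ (m + 1) ≤ |x| := pow_le_of_le_one (abs_nonneg x) (hax.trans (min_le_right _ _)) (by omega)
            _ ≤ ε := hax.trans (min_le_left _ _)
  · have h1 : HasDerivAt (fun _ : ℝ => (0 : ℝ) ^ (m + 2)) 0 x := hasDerivAt_const _ _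
    have heq : (fun y : ℝ => (min y 0) ^ (m + 2)) =ᶠ[nhds x] fun _ => (0 : ℝ) ^ (m + 2) := by
      filter_upwards [Ioi_mem_nhds hx] with y hy
      rw [min_eq_right (le_of_lt hy)]
    rw [min_eq_right hx.le]
    simpa [zero_pow] using h1.congr_of_eventuallyEq heq

lemma minpow_contDiff : ∀ m : ℕ, ContDiff ℝ (m : ℕ) (fun x : ℝ => (min x 0) ^ (m + 1)) := by
  intro m
  induction m with
  | zero =>
    rw [show ((0 : ℕ) : WithTop ℕ∞) = 0 by rfl, contDiff_zero]
    exact (continuous_id.min continuous_const).pow 1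
  | succ m ih =>
    rw [show ((m + 1 : ℕ) : WithTop ℕ∞) = (m : ℕ) + 1 by push_cast; rfl]
    rw [contDiff_succ_iff_deriv]
    refine ⟨fun x => ((minpow_hasDerivAt m x).differentiableAt), by simp, ?_⟩
    have hd : deriv (fun x : ℝ => (min x 0) ^ (m + 2)) =
        fun x => ((m : ℝ) + 2) * (min x 0) ^ (m + 1) := by
      funext x; exact (minpow_hasDerivAt m x).deriv
    rw [hd]
    exact contDiff_const.mul ih
end aux

section aux2
variable {E : Type*} [NormedAddCommGroup E] [NormedSpace ℝ E]

lemma deriv_pow_smul (m : ℕ) (a : ℝ) (s : ℝ → E) (hs : ContDiff ℝ ((⊤ : ℕ∞) : WithTop ℕ∞) s) :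
    deriv (fun t => (t - a) ^ (m + 1) • s t) =
      fun t => (t - a) ^ m • ((((m : ℝ) + 1)) • s t + (t - a) • deriv s t) := by
  funext t
  have h1 : HasDerivAt (fun t : ℝ => (t - a) ^ (m + 1)) (((m : ℝ) + 1) * (t - a) ^ m) t := by
    simpa using ((hasDerivAt_id t).sub_const a).fun_pow (m + 1)
  have h2 : HasDerivAt s (deriv s t) t :=
    (hs.differentiable (by simp) t).hasDerivAt
  rw [(h1.fun_smul h2).deriv, pow_succ]
  module

lemma stilde_contDiff (a : ℝ) (ψ : ℕ) (s : ℝ → E) (hs : ContDiff ℝ ((⊤ : ℕ∞) : WithTop ℕ∞) s) :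
    ContDiff ℝ ((⊤ : ℕ∞) : WithTop ℕ∞)
      (fun t : ℝ => (((ψ : ℝ) + 1)) • s t + (t - a) • deriv s t) := by
  have hds : ContDiff ℝ ((⊤ : ℕ∞) : WithTop ℕ∞) (deriv s) :=
    (contDiff_infty_iff_deriv.mp hs).2
  exact (hs.const_smul _).add ((contDiff_id.sub contDiff_const).smul hds)

lemma iteratedDeriv_pow_smul_eq_zero :
    ∀ (r φ : ℕ), r < φ → ∀ (a : ℝ) (s : ℝ → E), ContDiff ℝ ((⊤ : ℕ∞) : WithTop ℕ∞) s →
      iteratedDeriv r (fun t => (t - a) ^ φ • s t) a = 0 := by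
  intro r
  induction r with
  | zero =>
    intro φ hφ a s _
    rw [iteratedDeriv_zero]
    simp [zero_pow (by omega : φ ≠ 0)]
  | succ r ih =>
    intro φ hφ a s hs
    obtain ⟨ψ, rfl⟩ : ∃ ψ, φ = ψ + 1 := ⟨φ - 1, by omega⟩
    rw [iteratedDeriv_succ', deriv_pow_smul ψ a s hs]
    exact ih ψ (by omega) a _ (stilde_contDiff a ψ s hs)

lemma iteratedDeriv_const_add_pow_smul (r φ : ℕ) (hr : 1 ≤ r) (hrφ : r < φ) (a : ℝ) (w : E)
    (s : ℝ → E) (hs : ContDiff ℝ ((⊤ : ℕ∞) : WithTop ℕ∞) s) :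
    iteratedDeriv r (fun t => w + (t - a) ^ φ • s t) a = 0 := by
  obtain ⟨m, rfl⟩ : ∃ m, r = m + 1 := ⟨r - 1, by omega⟩
  obtain ⟨ψ, rfl⟩ : ∃ ψ, φ = ψ + 1 := ⟨φ - 1, by omega⟩
  rw [iteratedDeriv_succ']
  have hde : deriv (fun t => w + (t - a) ^ (ψ + 1) • s t) =
      deriv (fun t => (t - a) ^ (ψ + 1) • s t) := by
    exact deriv_const_add' w
  rw [hde, deriv_pow_smul ψ a s hs]
  exact iteratedDeriv_pow_smul_eq_zero m ψ (by omega) a _ (stilde_contDiff a ψ s hs)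
end aux2

lemma bernstein_sum_one (n : ℕ) (t : ℝ) :
    ∑ k ∈ Finset.range (n + 1), bernsteinBasis n k t = 1 := by
  have h := add_pow t (1 - t) n
  rw [show t + (1 - t) = 1 by ring, one_pow] at h
  rw [show (1 : ℝ) = ∑ m ∈ Finset.range (n + 1), t ^ m * (1 - t) ^ (n - m) * (n.choose m : ℝ) from h]
  apply Finset.sum_congr rfl
  intro k _
  unfold bernsteinBasis
  ring

section seg
variable {E : Type*} [NormedAddCommGroup E] [NormedSpace ℝ E]

lemma segC_eq (φ n : ℕ) (hφ : 1 ≤ φ) (hn : 2 * φ - 1 ≤ n) (c : ℕ → E) (wp : E)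
    (hc : ∀ k, n - φ + 1 ≤ k → k ≤ n → c k = wp) (t : ℝ) :
    ∑ k ∈ Finset.range (n + 1), bernsteinBasis n k t • c k =
      wp + (t - 1) ^ φ • ∑ k ∈ Finset.range (n + 1),
        ((-1 : ℝ) ^ φ * (n.choose k : ℝ) * t ^ k * (1 - t) ^ (n - k - φ)) • (c k - wp) := by
  have key : ∀ k ∈ Finset.range (n + 1), bernsteinBasis n k t • c k =
      bernsteinBasis n k t • wp +
        ((t - 1) ^ φ * ((-1 : ℝ) ^ φ * (n.choose k : ℝ) * t ^ k * (1 - t) ^ (n - k - φ)))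
          • (c k - wp) := by
    intro k hk
    rw [Finset.mem_range] at hk
    by_cases hkn : k ≤ n - φ
    · have hsc : bernsteinBasis n k t =
          (t - 1) ^ φ * ((-1 : ℝ) ^ φ * (n.choose k : ℝ) * t ^ k * (1 - t) ^ (n - k - φ)) := by
        unfold bernsteinBasis
        have h1 : (t - 1) ^ φ * (-1 : ℝ) ^ φ = (1 - t) ^ φ := by
          rw [← mul_pow]; ring_nf
        have h2 : (1 - t) ^ φ * (1 - t) ^ (n - k - φ) = (1 - t) ^ (n - k) := by
          rw [← pow_add]; congr 1; omega
        calc (n.choose k : ℝ) * t ^ k * (1 - t) ^ (n - k)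
            = ((1 - t) ^ φ * (1 - t) ^ (n - k - φ)) * ((n.choose k : ℝ) * t ^ k) := by
              rw [h2]; ring
          _ = ((t - 1) ^ φ * (-1 : ℝ) ^ φ * (1 - t) ^ (n - k - φ)) * ((n.choose k : ℝ) * t ^ k) := by
              rw [h1]
          _ = (t - 1) ^ φ * ((-1 : ℝ) ^ φ * (n.choose k : ℝ) * t ^ k * (1 - t) ^ (n - k - φ)) := by
              ring
      calc bernsteinBasis n k t • c k
          = bernsteinBasis n k t • wp + bernsteinBasis n k t • (c k - wp) := by
            rw [← smul_add]; congr 1; abel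
        _ = _ := by rw [hsc]
    · have hck : c k = wp := hc k (by omega) (by omega)
      simp [hck]
  rw [Finset.sum_congr rfl key, Finset.sum_add_distrib, Finset.smul_sum]
  congr 1
  · rw [← Finset.sum_smul, bernstein_sum_one, one_smul]
  · exact Finset.sum_congr rfl fun k _ => (smul_smul _ _ _).symm

lemma segD_eq (φ n : ℕ) (hφ : 1 ≤ φ) (d : ℕ → E) (wp : E)
    (hd : ∀ k ≤ φ - 1, d k = wp) (u : ℝ) :
    ∑ k ∈ Finset.range (n + 1), bernsteinBasis n k u • d k =
      wp + (u - 0) ^ φ • ∑ k ∈ Finset.range (n + 1),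
        ((n.choose k : ℝ) * u ^ (k - φ) * (1 - u) ^ (n - k)) • (d k - wp) := by
  rw [sub_zero]
  have key : ∀ k ∈ Finset.range (n + 1), bernsteinBasis n k u • d k =
      bernsteinBasis n k u • wp +
        (u ^ φ * ((n.choose k : ℝ) * u ^ (k - φ) * (1 - u) ^ (n - k))) • (d k - wp) := by
    intro k hk
    rw [Finset.mem_range] at hk
    by_cases hkn : φ ≤ k
    · have hsc : bernsteinBasis n k u =
          u ^ φ * ((n.choose k : ℝ) * u ^ (k - φ) * (1 - u) ^ (n - k)) := by
        unfold bernsteinBasis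
        have h2 : u ^ φ * u ^ (k - φ) = u ^ k := by
          rw [← pow_add]; congr 1; omega
        calc (n.choose k : ℝ) * u ^ k * (1 - u) ^ (n - k)
            = (u ^ φ * u ^ (k - φ)) * ((n.choose k : ℝ) * (1 - u) ^ (n - k)) := by
              rw [h2]; ring
          _ = u ^ φ * ((n.choose k : ℝ) * u ^ (k - φ) * (1 - u) ^ (n - k)) := by ring
      calc bernsteinBasis n k u • d k
          = bernsteinBasis n k u • wp + bernsteinBasis n k u • (d k - wp) := by
            rw [← smul_add]; congr 1; abel
        _ = _ := by rw [hsc]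
    · have hdk : d k = wp := hd k (by omega)
      simp [hdk]
  rw [Finset.sum_congr rfl key, Finset.sum_add_distrib, Finset.smul_sum]
  congr 1
  · rw [← Finset.sum_smul, bernstein_sum_one, one_smul]
  · exact Finset.sum_congr rfl fun k _ => (smul_smul _ _ _).symm
end seg

/-- Two Bernstein segments whose last (resp. first) `φ` control points coincide at a common
waypoint `π` join into a piecewise curve that is well defined and continuously differentiable
up to order `φ - 1`; in particular all derivatives of orders `1, …, φ-1` of both pieces vanish
at the junction. -/
theorem piecewise_bernstein_smooth_junction (φ n : ℕ) (hφ : 1 ≤ φ) (hn : 2 * φ - 1 ≤ n)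
    (c d : ℕ → EuclideanSpace ℝ (Fin 3)) (wp : EuclideanSpace ℝ (Fin 3))
    (hc : ∀ k, n - φ + 1 ≤ k → k ≤ n → c k = wp)
    (hd : ∀ k ≤ φ - 1, d k = wp) :
    (∑ k ∈ Finset.range (n + 1), bernsteinBasis n k (1 : ℝ) • c k) = wp ∧
    (∑ k ∈ Finset.range (n + 1), bernsteinBasis n k (0 : ℝ) • d k) = wp ∧
    ContDiffOn ℝ (φ - 1 : ℕ)
      (fun t : ℝ => if t ≤ 1 then ∑ k ∈ Finset.range (n + 1), bernsteinBasis n k t • c k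
        else ∑ k ∈ Finset.range (n + 1), bernsteinBasis n k (t - 1) • d k)
      (Set.Ioo (0 : ℝ) 2) ∧
    ∀ r, 1 ≤ r → r ≤ φ - 1 →
      iteratedDeriv r (fun t : ℝ => ∑ k ∈ Finset.range (n + 1), bernsteinBasis n k t • c k)
        (1 : ℝ) = 0 ∧
      iteratedDeriv r (fun t : ℝ => ∑ k ∈ Finset.range (n + 1), bernsteinBasis n k t • d k)
        (0 : ℝ) = 0 := by
  -- the auxiliary smooth vector fields
  set sC : ℝ → EuclideanSpace ℝ (Fin 3) := fun t => ∑ k ∈ Finset.range (n + 1),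
    ((-1 : ℝ) ^ φ * (n.choose k : ℝ) * t ^ k * (1 - t) ^ (n - k - φ)) • (c k - wp) with hsCdef
  set sD : ℝ → EuclideanSpace ℝ (Fin 3) := fun u => ∑ k ∈ Finset.range (n + 1),
    ((n.choose k : ℝ) * u ^ (k - φ) * (1 - u) ^ (n - k)) • (d k - wp) with hsDdef
  have hsC : ContDiff ℝ ((⊤ : ℕ∞) : WithTop ℕ∞) sC := by
    apply ContDiff.sum
    intro k _
    exact ContDiff.fun_smul (by fun_prop) contDiff_const
  have hsD : ContDiff ℝ ((⊤ : ℕ∞) : WithTop ℕ∞) sD := by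
    apply ContDiff.sum
    intro k _
    exact ContDiff.fun_smul (by fun_prop) contDiff_const
  have hIC := segC_eq φ n hφ hn c wp hc
  have hID := segD_eq φ n hφ d wp hd
  have hle : ((φ - 1 : ℕ) : WithTop ℕ∞) ≤ ((⊤ : ℕ∞) : WithTop ℕ∞) := by
    exact WithTop.coe_le_coe.mpr le_top
  refine ⟨?_, ?_, ?_, ?_⟩
  · rw [Finset.sum_eq_single_of_mem n (Finset.self_mem_range_succ n)]
    · have h1 : bernsteinBasis n n 1 = 1 := by simp [bernsteinBasis]
      rw [h1, one_smul]
      exact hc n (by omega) le_rfl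
    · intro b hb hbn
      rw [Finset.mem_range] at hb
      have : bernsteinBasis n b 1 = 0 := by
        simp [bernsteinBasis, zero_pow (show n - b ≠ 0 by omega)]
      rw [this, zero_smul]
  · rw [Finset.sum_eq_single_of_mem 0 (Finset.mem_range.mpr (by omega))]
    · have h1 : bernsteinBasis n 0 0 = 1 := by simp [bernsteinBasis]
      rw [h1, one_smul]
      exact hd 0 (Nat.zero_le _)
    · intro b hb hbn
      have : bernsteinBasis n b 0 = 0 := by
        simp [bernsteinBasis, zero_pow hbn]
      rw [this, zero_smul]
  · have hF : (fun t : ℝ => if t ≤ 1 then ∑ k ∈ Finset.range (n + 1), bernsteinBasis n k t • c k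
        else ∑ k ∈ Finset.range (n + 1), bernsteinBasis n k (t - 1) • d k) =
        fun t : ℝ => (wp + (t - 1) ^ φ • sD (t - 1)) + (min (t - 1) 0) ^ φ • (sC t - sD (t - 1)) := by
      funext t
      by_cases ht : t ≤ 1
      · rw [if_pos ht, hIC t, min_eq_left (by linarith : t - 1 ≤ (0 : ℝ))]
        rw [smul_sub]
        abel
      · rw [if_neg ht, hID (t - 1), sub_zero,
          min_eq_right (by linarith [not_le.mp ht] : (0 : ℝ) ≤ t - 1),
          zero_pow (by omega : φ ≠ 0), zero_smul, add_zero]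
    rw [hF]
    apply ContDiff.contDiffOn
    have hmin : ContDiff ℝ ((φ - 1 : ℕ) : WithTop ℕ∞) (fun t : ℝ => (min (t - 1) 0) ^ (φ - 1 + 1)) :=
      ContDiff.comp (minpow_contDiff (φ - 1)) (contDiff_id.sub contDiff_const)
    rw [Nat.sub_add_cancel hφ] at hmin
    have hsDs : ContDiff ℝ ((⊤ : ℕ∞) : WithTop ℕ∞)
        (fun t : ℝ => sD (t - 1)) := hsD.comp (contDiff_id.sub contDiff_const)
    refine ContDiff.add (ContDiff.of_le ?_ hle) (hmin.smul ((hsC.sub hsDs).of_le hle))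
    exact contDiff_const.add (((contDiff_id.sub contDiff_const).pow φ).smul hsDs)
  · intro r hr1 hr2
    have hrφ : r < φ := by omega
    constructor
    · rw [funext hIC]
      exact iteratedDeriv_const_add_pow_smul r φ hr1 hrφ 1 wp sC hsC
    · rw [funext hID]
      exact iteratedDeriv_const_add_pow_smul r φ hr1 hrφ 0 wp sD hsD
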